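/- Let E0 > 0. Suppose γ_n > 0 with γ_n → 0, μ_n > 0, and for each n the pair (q_n, ν_n) with ν_n > 0 and −1 < q_n < 1 satisfies equation (B) of the transition system for the parameters (E0, γ_n, μ_n), with q_n → 1 and ν_n → √(E0(E0+4)). Then γ_n²/μ_n → 2(2 + E0 + √(E0(E0+4))), and the corresponding frequencies ω_n = E1(γ_n) + ν_n converge to E0 + √(E0(E0+4)). (This is the power law and limiting frequency of the ω2-ω3 bifurcation.) -/
import Mathlib


open Filter

/-- The unique positive root of `ε² + (E0+4)ε - γ² = 0`. -/
noncomputable def epsPar (E0 γ : ℝ) : ℝ :=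
  (-(E0 + 4) + Real.sqrt ((E0 + 4)^2 + 4 * γ^2)) / 2

/-- `E1 = E0 + ε`. -/
noncomputable def E1Par (E0 γ : ℝ) : ℝ := E0 + epsPar E0 γ

/-- `a = 4 + E0 + ε`. -/
noncomputable def aPar (E0 γ : ℝ) : ℝ := 4 + E0 + epsPar E0 γ

/-- Equation (A) of the transition system:
`(1-q)(1+q) = 12γ⁴ / (ν² (ν+E1) (ν+a+ε)²)`. -/
def EqA (E0 γ q ν : ℝ) : Prop :=
  (1 - q) * (1 + q) =
    12 * γ^4 / (ν^2 * (ν + E1Par E0 γ) * (ν + aPar E0 γ + epsPar E0 γ)^2)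

/-- Equation (B) of the transition system:
`(2+q)²/(1+q) = (9/2)(μ/γ²)(ν+a)²(ν+E1)/(ν(ν+a+ε))`. -/
def EqB (E0 γ μ q ν : ℝ) : Prop :=
  (2 + q)^2 / (1 + q) =
    (9/2) * (μ / γ^2) * ((ν + aPar E0 γ)^2 * (ν + E1Par E0 γ)) /
      (ν * (ν + aPar E0 γ + epsPar E0 γ))


/-- power law of the ω2-ω3 bifurcation: if solutions of equation (B)
have `q → 1` and `ν → √(E0(E0+4))`, then `γ²/μ → 2(2 + E0 + √(E0(E0+4)))` and the
frequencies `ω = E1 + ν` converge to `E0 + √(E0(E0+4))`. -/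
theorem omega23_bifurcation_power_law
    (E0 : ℝ) (hE0 : 0 < E0) (γ μ q ν : ℕ → ℝ)
    (hγpos : ∀ n, 0 < γ n)
    (hγ0 : Tendsto γ atTop (nhds 0))
    (hμpos : ∀ n, 0 < μ n)
    (hνpos : ∀ n, 0 < ν n)
    (hq : ∀ n, -1 < q n ∧ q n < 1)
    (hB : ∀ n, EqB E0 (γ n) (μ n) (q n) (ν n))
    (hq1 : Tendsto q atTop (nhds 1))
    (hν : Tendsto ν atTop (nhds (Real.sqrt (E0 * (E0 + 4))))) :
    Tendsto (fun n => (γ n)^2 / μ n) atTop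
        (nhds (2 * (2 + E0 + Real.sqrt (E0 * (E0 + 4))))) ∧
    Tendsto (fun n => E1Par E0 (γ n) + ν n) atTop
        (nhds (E0 + Real.sqrt (E0 * (E0 + 4)))) := by
  
  set s := Real.sqrt (E0 * (E0 + 4)) with hs
  have hsnn : (0:ℝ) ≤ s := Real.sqrt_nonneg _
  have hs2 : s ^ 2 = E0 * (E0 + 4) := Real.sq_sqrt (by nlinarith)
  have hspos : 0 < s := Real.sqrt_pos.mpr (by nlinarith)
  -- epsilon facts
  have hεn : ∀ n, 0 < epsPar E0 (γ n) := by
    intro n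
    have h1 : E0 + 4 < Real.sqrt ((E0 + 4)^2 + 4 * (γ n)^2) := by
      have := hγpos n
      nlinarith [Real.sq_sqrt (show (0:ℝ) ≤ (E0+4)^2 + 4*(γ n)^2 by positivity),
        Real.sqrt_nonneg ((E0+4)^2 + 4*(γ n)^2)]
    unfold epsPar; linarith
  have hc : Continuous (fun g : ℝ => epsPar E0 g) := by
    unfold epsPar; continuity
  have hεt : Tendsto (fun n => epsPar E0 (γ n)) atTop (nhds 0) := by
    have h := (hc.tendsto 0).comp hγ0
    have h0 : epsPar E0 0 = 0 := by
      unfold epsPar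
      rw [show (E0+4)^2 + 4*(0:ℝ)^2 = (E0+4)^2 by ring,
        Real.sqrt_sq (by linarith : (0:ℝ) ≤ E0+4)]
      ring
    rw [h0] at h
    exact h
  have hE1t : Tendsto (fun n => E1Par E0 (γ n)) atTop (nhds E0) := by
    have h := (tendsto_const_nhds : Tendsto (fun _ : ℕ => E0) atTop (nhds E0)).add hεt
    simpa [E1Par] using h
  have hat : Tendsto (fun n => aPar E0 (γ n)) atTop (nhds (4 + E0)) := by
    have h := (tendsto_const_nhds : Tendsto (fun _ : ℕ => 4 + E0) atTop (nhds (4 + E0))).add hεt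
    simpa [aPar] using h
  have homega : Tendsto (fun n => E1Par E0 (γ n) + ν n) atTop
      (nhds (E0 + s)) := hE1t.add hν
  refine ⟨?_, homega⟩
  -- positivity per n
  have haε : ∀ n, 0 < ν n + aPar E0 (γ n) + epsPar E0 (γ n) := by
    intro n
    have := hεn n; have := hνpos n
    unfold aPar; linarith
  -- key identity
  have key : ∀ n, (γ n)^2 / μ n =
      ((9/2) * ((ν n + aPar E0 (γ n))^2 * (ν n + E1Par E0 (γ n))) /
        (ν n * (ν n + aPar E0 (γ n) + epsPar E0 (γ n)))) /
      ((2 + q n)^2 / (1 + q n)) := by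
    intro n
    have hb := hB n
    unfold EqB at hb
    have hγn := hγpos n
    have hμn := hμpos n
    have hνn := hνpos n
    have hq1n : (0:ℝ) < 1 + q n := by linarith [(hq n).1]
    have hq2n : (0:ℝ) < 2 + q n := by linarith [(hq n).1]
    have hd := haε n
    have hγne : (γ n)^2 ≠ 0 := by positivity
    field_simp at hb ⊢
    nlinarith [hb, sq_nonneg (γ n), sq_nonneg (2 + q n)]
  -- tendsto of the RHS
  have hnum : Tendsto (fun n => (9/2) * ((ν n + aPar E0 (γ n))^2 * (ν n + E1Par E0 (γ n))) /
      (ν n * (ν n + aPar E0 (γ n) + epsPar E0 (γ n)))) atTop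
      (nhds ((9/2) * ((s + (4+E0))^2 * (s + E0)) / (s * (s + (4+E0) + 0)))) := by
    apply Tendsto.div
    · exact tendsto_const_nhds.mul (((hν.add hat).pow 2).mul (hν.add hE1t))
    · exact hν.mul ((hν.add hat).add hεt)
    · have : 0 < s + (4+E0) + 0 := by linarith
      positivity
  have hden : Tendsto (fun n => (2 + q n)^2 / (1 + q n)) atTop
      (nhds (((2:ℝ) + 1)^2 / (1 + 1))) := by
    apply Tendsto.div
    · exact ((tendsto_const_nhds.add hq1).pow 2)
    · exact tendsto_const_nhds.add hq1
    · norm_num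
  have hfinal := hnum.div hden (by norm_num)
  have heq : (9/2) * ((s + (4+E0))^2 * (s + E0)) / (s * (s + (4+E0) + 0)) /
      (((2:ℝ) + 1)^2 / (1 + 1)) = 2 * (2 + E0 + s) := by
    have h1 : s + (4+E0) ≠ 0 := by positivity
    have h2 : s ≠ 0 := ne_of_gt hspos
    field_simp
    nlinarith [hs2]
  rw [heq] at hfinal
  exact Tendsto.congr (fun n => (key n).symm) hfinal
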